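/- Let S = {v₁, …, vₙ} ⊆ ℤ^g be a finite set and suppose v₁ ≠ v₂ are both ℤ^g-coloops of S. Let σ = { ∑ᵢ λᵢ vᵢvᵢᵀ : λᵢ ≥ 0 } be the cone of real symmetric matrices generated by the rank-one forms vᵢvᵢᵀ. Then there exists A ∈ GL_g(ℤ) such that the linear map X ↦ A X Aᵀ on symmetric matrices maps σ onto σ, and its restriction to the ℝ-linear span of σ has determinant −1 (i.e. σ has an orientation-reversing automorphism induced by an element of GL_g(ℤ)). -/

import Mathlib

open Matrix

/-- `v` is a `ℤ^g`-coloop of `S ⊆ ℤ^g`: there is a `ℤ`-basis of `ℤ^g` containing `v`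
such that every other element of `S` lies in the `ℤ`-span of the remaining basis
vectors. -/
def IsZColoop {g : ℕ} (S : Set (Fin g → ℤ)) (v : Fin g → ℤ) : Prop :=
  ∃ (b : Module.Basis (Fin g) ℤ (Fin g → ℤ)) (i₀ : Fin g), b i₀ = v ∧
    ∀ w ∈ S, w ≠ v → w ∈ Submodule.span ℤ (b '' {i | i ≠ i₀})

/-- The linear endomorphism `X ↦ B X Bᵀ` of the space of `g × g` real matrices. -/
def conjMap {g : ℕ} (B : Matrix (Fin g) (Fin g) ℝ) :
    Matrix (Fin g) (Fin g) ℝ →ₗ[ℝ] Matrix (Fin g) (Fin g) ℝ where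
  toFun X := B * X * Bᵀ
  map_add' X Y := by simp [Matrix.mul_add, Matrix.add_mul]
  map_smul' c X := by simp [Matrix.mul_smul, Matrix.smul_mul]

/-- The cone `σ = { ∑ᵢ λᵢ vᵢvᵢᵀ : λᵢ ≥ 0 }` of real symmetric matrices generated by the
rank-one forms `vᵢvᵢᵀ`. -/
def coneOf {g n : ℕ} (v : Fin n → Fin g → ℤ) : Set (Matrix (Fin g) (Fin g) ℝ) :=
  {Q | ∃ lam : Fin n → ℝ, (∀ i, 0 ≤ lam i) ∧
    Q = ∑ i, lam i • Matrix.vecMulVec (fun j => (v i j : ℝ)) (fun j => (v i j : ℝ))}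

lemma conj_vecMulVec {g : ℕ} (B : Matrix (Fin g) (Fin g) ℝ) (a b : Fin g → ℝ) :
    B * vecMulVec a b * Bᵀ = vecMulVec (B *ᵥ a) (B *ᵥ b) := by
  ext i j
  simp only [Matrix.mul_apply, vecMulVec_apply, transpose_apply, mulVec, dotProduct,
    Finset.sum_mul, Finset.mul_sum]
  conv_lhs => rw [Finset.sum_comm]
  conv_rhs => rw [Finset.sum_comm]
  exact Finset.sum_congr rfl fun k _ => Finset.sum_congr rfl fun l _ => by ring

lemma mulVec_cast {g : ℕ} (A : Matrix (Fin g) (Fin g) ℤ) (u : Fin g → ℤ) :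
    (A.map (Int.cast : ℤ → ℝ)) *ᵥ (fun j => (u j : ℝ)) = fun j => ((A *ᵥ u) j : ℝ) := by
  funext i
  exact (RingHom.map_mulVec (Int.castRingHom ℝ) A u i).symm

lemma coord_vanish {g : ℕ} (b : Module.Basis (Fin g) ℤ (Fin g → ℤ)) (i₀ : Fin g) {x : Fin g → ℤ}
    (hx : x ∈ Submodule.span ℤ (b '' {i | i ≠ i₀})) : b.repr x i₀ = 0 := by
  have hle : Submodule.span ℤ (b '' {i | i ≠ i₀}) ≤ LinearMap.ker (b.coord i₀) := by
    rw [Submodule.span_le]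
    rintro _ ⟨j, hj, rfl⟩
    simp only [SetLike.mem_coe, LinearMap.mem_ker, Module.Basis.coord_apply, Module.Basis.repr_self]
    exact Finsupp.single_eq_of_ne (Ne.symm hj)
  simpa using hle hx

lemma det_prodMap' {M₁ M₂ : Type*} [AddCommGroup M₁] [AddCommGroup M₂]
    [Module ℝ M₁] [Module ℝ M₂] [FiniteDimensional ℝ M₁] [FiniteDimensional ℝ M₂]
    (f : M₁ →ₗ[ℝ] M₁) (h : M₂ →ₗ[ℝ] M₂) :
    LinearMap.det (f.prodMap h) = LinearMap.det f * LinearMap.det h := by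
  classical
  let b₁ := Module.finBasis ℝ M₁
  let b₂ := Module.finBasis ℝ M₂
  rw [← LinearMap.det_toMatrix (b₁.prod b₂), LinearMap.toMatrix_prodMap,
    Matrix.det_fromBlocks_zero₂₁, LinearMap.det_toMatrix, LinearMap.det_toMatrix]


set_option maxHeartbeats 1600000 in
set_option synthInstance.maxHeartbeats 400000 in
/-- If `v₁ ≠ v₂` are two distinct `ℤ^g`-coloops of `S = {v₁, …, vₙ}`, then
the cone `σ = ℝ≥0⟨v₁v₁ᵀ, …, vₙvₙᵀ⟩` has an orientation-reversing automorphism induced by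
an element of `GL_g(ℤ)`: some `A` with `det A = ±1` such that `X ↦ A X Aᵀ` maps `σ` onto
`σ` and restricts to the `ℝ`-span of `σ` with determinant `−1`. -/
theorem two_coloops_orientation_reversing_automorphism
    {g n : ℕ} (v : Fin n → Fin g → ℤ) (i₁ i₂ : Fin n) (hne : v i₁ ≠ v i₂)
    (hc1 : IsZColoop (Set.range v) (v i₁)) (hc2 : IsZColoop (Set.range v) (v i₂)) :
    ∃ A : Matrix (Fin g) (Fin g) ℤ, IsUnit A.det ∧
      conjMap (A.map (Int.cast : ℤ → ℝ)) '' coneOf v = coneOf v ∧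
      ∃ hW : ∀ X ∈ Submodule.span ℝ (coneOf v),
          conjMap (A.map (Int.cast : ℤ → ℝ)) X ∈ Submodule.span ℝ (coneOf v),
        LinearMap.det ((conjMap (A.map (Int.cast : ℤ → ℝ))).restrict hW) = -1 := by
  classical
  obtain ⟨b, i₀, hb0, hbS⟩ := hc1
  obtain ⟨c, j₀, hc0, hcS⟩ := hc2
  set u : Fin g → ℤ := v i₂ - v i₁ with hu
  set f : (Fin g → ℤ) →ₗ[ℤ] (Fin g → ℤ) :=
    LinearMap.id + (LinearMap.toSpanSingleton ℤ (Fin g → ℤ) u).comp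
      ((b.coord i₀ : (Fin g → ℤ) →ₗ[ℤ] ℤ) - c.coord j₀) with hf
  have hfx : ∀ x, f x = x + (b.repr x i₀ - c.repr x j₀) • u := by
    intro x
    simp [hf, LinearMap.toSpanSingleton_apply, Module.Basis.coord_apply]
  have hb1 : b.repr (v i₁) i₀ = 1 := by rw [← hb0]; simp
  have hb2 : b.repr (v i₂) i₀ = 0 :=
    coord_vanish b i₀ (hbS (v i₂) ⟨i₂, rfl⟩ (Ne.symm hne))
  have hc2' : c.repr (v i₂) j₀ = 1 := by rw [← hc0]; simp
  have hc1' : c.repr (v i₁) j₀ = 0 :=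
    coord_vanish c j₀ (hcS (v i₁) ⟨i₁, rfl⟩ hne)
  have hfv1 : f (v i₁) = v i₂ := by
    rw [hfx, hb1, hc1', hu]; simp
  have hfv2 : f (v i₂) = v i₁ := by
    rw [hfx, hb2, hc2', hu]; simp
  have hfvi : ∀ i, v i ≠ v i₁ → v i ≠ v i₂ → f (v i) = v i := by
    intro i h1 h2
    rw [hfx, coord_vanish b i₀ (hbS (v i) ⟨i, rfl⟩ h1),
      coord_vanish c j₀ (hcS (v i) ⟨i, rfl⟩ h2)]
    simp
  have hbu : b.repr u i₀ = -1 := by rw [hu]; simp [map_sub, hb1, hb2]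
  have hcu : c.repr u j₀ = 1 := by rw [hu]; simp [map_sub, hc1', hc2']
  have hff : ∀ x, f (f x) = x := by
    intro x
    have h1 : b.repr (f x) i₀ = c.repr x j₀ := by
      rw [hfx, map_add, _root_.map_smul, Finsupp.add_apply, Finsupp.smul_apply, hbu, smul_eq_mul]
      ring
    have h2 : c.repr (f x) j₀ = b.repr x i₀ := by
      rw [hfx, map_add, _root_.map_smul, Finsupp.add_apply, Finsupp.smul_apply, hcu, smul_eq_mul]
      ring
    rw [hfx (f x), h1, h2, hfx x, add_assoc, ← add_smul]
    simp
  set A : Matrix (Fin g) (Fin g) ℤ := LinearMap.toMatrix' f with hA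
  have hAv : ∀ x, A *ᵥ x = f x := by
    intro x
    rw [hA, ← Matrix.toLin'_apply, Matrix.toLin'_toMatrix']
  have hAA : A * A = 1 := by
    have hcomp : f ∘ₗ f = LinearMap.id := LinearMap.ext hff
    rw [hA, ← LinearMap.toMatrix'_comp, hcomp, LinearMap.toMatrix'_id]
  have hdetA : IsUnit A.det :=
    IsUnit.of_mul_eq_one _ (by rw [← Matrix.det_mul, hAA, Matrix.det_one])
  set B : Matrix (Fin g) (Fin g) ℝ := A.map (Int.cast : ℤ → ℝ) with hB
  have hBB : B * B = 1 := by
    show A.map ⇑(Int.castRingHom ℝ) * A.map ⇑(Int.castRingHom ℝ) = 1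
    rw [← Matrix.map_mul, hAA]
    exact Matrix.map_one _ (by simp) (by simp)
  have hK2 : ∀ X, conjMap B (conjMap B X) = X := by
    intro X
    show B * (B * X * Bᵀ) * Bᵀ = X
    have h1 : B * (B * X * Bᵀ) * Bᵀ = B * B * X * (Bᵀ * Bᵀ) := by
      simp only [Matrix.mul_assoc]
    rw [h1, ← Matrix.transpose_mul, hBB, Matrix.transpose_one, Matrix.mul_one, Matrix.one_mul]
  set Vec : (Fin g → ℤ) → Fin g → ℝ := fun x j => (x j : ℝ) with hVec
  set Qm : (Fin g → ℤ) → Matrix (Fin g) (Fin g) ℝ := fun x => vecMulVec (Vec x) (Vec x) with hQm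
  have hKQ : ∀ x, conjMap B (Qm x) = Qm (f x) := by
    intro x
    show B * vecMulVec (Vec x) (Vec x) * Bᵀ = _
    rw [conj_vecMulVec]
    have h := mulVec_cast A x
    rw [hAv] at h
    have h2 : B *ᵥ Vec x = Vec (f x) := h
    rw [h2]
  set τ : Fin n → Fin n := fun i => if v i = v i₁ then i₂ else if v i = v i₂ then i₁ else i
    with hτ
  have hfτ : ∀ i, f (v i) = v (τ i) := by
    intro i
    by_cases h1 : v i = v i₁
    · simp only [hτ, if_pos h1]; rw [h1, hfv1]
    · by_cases h2 : v i = v i₂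
      · simp only [hτ, if_neg h1, if_pos h2]; rw [h2, hfv2]
      · simp only [hτ, if_neg h1, if_neg h2]; exact hfvi i h1 h2
  have hQC : ∀ (lam : Fin n → ℝ), (∀ i, 0 ≤ lam i) → ∀ τ' : Fin n → Fin n,
      (∑ i, lam i • Qm (v (τ' i))) ∈ coneOf v := by
    intro lam hlam τ'
    refine ⟨fun j => ∑ i ∈ Finset.univ.filter (fun i => τ' i = j), lam i,
      fun j => Finset.sum_nonneg fun i _ => hlam i, ?_⟩
    have : ∑ j, (∑ i ∈ Finset.univ.filter (fun i => τ' i = j), lam i) • Qm (v j)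
        = ∑ i, lam i • Qm (v (τ' i)) := by
      rw [← Finset.sum_fiberwise Finset.univ τ' (fun i => lam i • Qm (v (τ' i)))]
      refine Finset.sum_congr rfl fun j _ => ?_
      rw [Finset.sum_smul]
      exact Finset.sum_congr rfl fun i hi => by
        rw [(Finset.mem_filter.mp hi).2]
    exact this.symm
  have hgen : ∀ i, Qm (v i) ∈ coneOf v := by
    intro i
    have h := hQC (fun j => if j = i then 1 else 0)
      (fun j => by split <;> norm_num) id
    have hsum : ∑ j, (if j = i then (1:ℝ) else 0) • Qm (v (id j)) = Qm (v i) := by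
      simp [ite_smul]
    rwa [hsum] at h
  have hmapC : ∀ X ∈ coneOf v, conjMap B X ∈ coneOf v := by
    rintro X ⟨lam, hlam, rfl⟩
    have hc : conjMap B (∑ i, lam i • Qm (v i)) = ∑ i, lam i • Qm (v (τ i)) := by
      rw [map_sum]
      exact Finset.sum_congr rfl fun i _ => by rw [_root_.map_smul, hKQ, hfτ]
    have hX : (∑ i, lam i • Matrix.vecMulVec (fun j => ((v i j : ℤ) : ℝ))
        (fun j => ((v i j : ℤ) : ℝ))) = ∑ i, lam i • Qm (v i) := rfl
    rw [hX, hc]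
    exact hQC lam hlam τ
  have himg : conjMap B '' coneOf v = coneOf v := by
    apply Set.Subset.antisymm
    · rintro _ ⟨X, hX, rfl⟩; exact hmapC X hX
    · intro X hX; exact ⟨conjMap B X, hmapC X hX, hK2 X⟩
  set V : Submodule ℝ (Matrix (Fin g) (Fin g) ℝ) := Submodule.span ℝ (coneOf v) with hV
  have hW : ∀ X ∈ V, conjMap B X ∈ V := by
    intro X hX
    have hle : V.map (conjMap B) ≤ V := by
      rw [hV, Submodule.map_span, Submodule.span_le]
      rintro _ ⟨Y, hY, rfl⟩
      exact Submodule.subset_span (hmapC Y hY)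
    exact hle ⟨X, hX, rfl⟩
  set d : Matrix (Fin g) (Fin g) ℝ := Qm (v i₁) - Qm (v i₂) with hd
  have hv1ne : v i₁ ≠ 0 := hb0 ▸ b.ne_zero i₀
  have hd0 : d ≠ 0 := by
    intro h
    have hQQ : Qm (v i₁) = Qm (v i₂) := by
      have := sub_eq_zero.mp (hd ▸ h)
      exact this
    obtain ⟨k, hk⟩ : ∃ k, v i₁ k ≠ 0 := Function.ne_iff.mp hv1ne
    have hjk : ∀ j k', v i₁ j * v i₁ k' = v i₂ j * v i₂ k' := by
      intro j k'
      have h2 := congrFun (congrFun congr(Matrix.of.symm $hQQ) j) k'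
      have h3 : (v i₁ j : ℝ) * (v i₁ k' : ℝ) = (v i₂ j : ℝ) * (v i₂ k' : ℝ) := h2
      exact_mod_cast h3
    have hvec : v i₁ k • v i₁ = v i₂ k • v i₂ := by
      funext j
      simpa [Pi.smul_apply, smul_eq_mul, mul_comm] using hjk j k
    have h4 := congrArg (fun x => b.repr x i₀) hvec
    simp only [_root_.map_smul, Finsupp.smul_apply, hb1, hb2, smul_eq_mul, mul_one,
      mul_zero] at h4
    exact hk h4
  have hKd : conjMap B d = -d := by
    rw [hd, map_sub, hKQ, hKQ, hfv1, hfv2, neg_sub]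
  set F : Submodule ℝ (Matrix (Fin g) (Fin g) ℝ) :=
    Submodule.span ℝ ({X | ∃ i, v i ≠ v i₁ ∧ v i ≠ v i₂ ∧ X = Qm (v i)} ∪
      {Qm (v i₁) + Qm (v i₂)}) with hF
  have hKF : ∀ x ∈ F, conjMap B x = x := by
    intro x hx
    induction hx using Submodule.span_induction with
    | mem x hx =>
      rcases hx with hx | hx
      · obtain ⟨i, h1, h2, rfl⟩ := hx
        rw [hKQ, hfvi i h1 h2]
      · rw [Set.mem_singleton_iff.mp hx, map_add, hKQ, hKQ, hfv1, hfv2, add_comm]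
    | zero => simp
    | add x y _ _ hx hy => rw [map_add, hx, hy]
    | smul t x _ hx => rw [_root_.map_smul, hx]
  have hdnF : d ∉ F := by
    intro hdf
    have h1 := hKF d hdf
    rw [hKd] at h1
    have h2 : d + d = 0 := by nth_rewrite 1 [← h1]; exact neg_add_cancel d
    have h3 : (2:ℝ) • d = 0 := by rw [two_smul]; exact h2
    rcases smul_eq_zero.mp h3 with h | h
    · norm_num at h
    · exact hd0 h
  have hFV : F ≤ V := by
    rw [hF, Submodule.span_le]
    rintro x (⟨i, _, _, rfl⟩ | hx)
    · exact Submodule.subset_span (hgen i)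
    · rw [Set.mem_singleton_iff.mp hx]
      exact add_mem (Submodule.subset_span (hgen i₁)) (Submodule.subset_span (hgen i₂))
  have hdV : d ∈ V :=
    sub_mem (Submodule.subset_span (hgen i₁)) (Submodule.subset_span (hgen i₂))
  have hsplit : ∀ i, Qm (v i) ∈ F ⊔ (ℝ ∙ d) := by
    intro i
    by_cases h1 : v i = v i₁
    · refine Submodule.mem_sup.mpr ⟨(1/2 : ℝ) • (Qm (v i₁) + Qm (v i₂)), ?_, (1/2:ℝ) • d,
        Submodule.smul_mem _ _ (Submodule.mem_span_singleton_self d), ?_⟩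
      · exact F.smul_mem _ (Submodule.subset_span (Or.inr rfl))
      · rw [← smul_add, h1]
        have : Qm (v i₁) + Qm (v i₂) + d = Qm (v i₁) + Qm (v i₁) := by rw [hd]; abel
        rw [this, ← two_smul ℝ, smul_smul]
        norm_num
    · by_cases h2 : v i = v i₂
      · refine Submodule.mem_sup.mpr ⟨(1/2 : ℝ) • (Qm (v i₁) + Qm (v i₂)), ?_, -((1/2:ℝ) • d),
          neg_mem (Submodule.smul_mem _ _ (Submodule.mem_span_singleton_self d)), ?_⟩
        · exact F.smul_mem _ (Submodule.subset_span (Or.inr rfl))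
        · rw [← smul_neg, ← smul_add, h2]
          have : Qm (v i₁) + Qm (v i₂) + -d = Qm (v i₂) + Qm (v i₂) := by rw [hd]; abel
          rw [this, ← two_smul ℝ, smul_smul]
          norm_num
      · exact Submodule.mem_sup_left (Submodule.subset_span (Or.inl ⟨i, h1, h2, rfl⟩))
  have hVle : V ≤ F ⊔ (ℝ ∙ d) := by
    rw [hV, Submodule.span_le]
    rintro _ ⟨lam, hlam, rfl⟩
    exact sum_mem fun i _ => Submodule.smul_mem _ _ (hsplit i)
  set D : Submodule ℝ (Matrix (Fin g) (Fin g) ℝ) := ℝ ∙ d with hD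
  have hDV : D ≤ V := by
    rw [hD, Submodule.span_le, Set.singleton_subset_iff]; exact hdV
  have hFD : ∀ x, x ∈ F → x ∈ D → x = 0 := by
    intro x hxF hxD
    obtain ⟨t, ht⟩ := Submodule.mem_span_singleton.mp hxD
    by_cases ht0 : t = 0
    · rw [← ht, ht0, zero_smul]
    · exfalso
      apply hdnF
      have h5 : d = t⁻¹ • x := by
        rw [← ht, smul_smul, inv_mul_cancel₀ ht0, one_smul]
      rw [h5]
      exact F.smul_mem _ hxF
  set ψ : (F × D) →ₗ[ℝ] V :=
    LinearMap.codRestrict V (F.subtype.coprod D.subtype)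
      (fun x => add_mem (hFV x.1.2) (hDV x.2.2)) with hψ
  have hψval : ∀ p : F × D, (ψ p : Matrix (Fin g) (Fin g) ℝ) = (p.1 : _) + (p.2 : _) := by
    intro p; rfl
  have hψbij : Function.Bijective ψ := by
    constructor
    · intro p q hpq
      have hval : (p.1 : Matrix (Fin g) (Fin g) ℝ) + p.2 = (q.1 : _) + q.2 := by
        have := congrArg (Subtype.val) hpq
        rwa [hψval, hψval] at this
      have h1 : (p.1 : Matrix (Fin g) (Fin g) ℝ) - q.1 = (q.2 : _) - p.2 :=
        sub_eq_sub_iff_add_eq_add.mpr (by rw [hval, add_comm])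
      have hsub : (p.1 : Matrix (Fin g) (Fin g) ℝ) - q.1 = 0 :=
        hFD _ (sub_mem p.1.2 q.1.2) (h1 ▸ sub_mem q.2.2 p.2.2)
      have h2 : (q.2 : Matrix (Fin g) (Fin g) ℝ) - p.2 = 0 := by rw [← h1]; exact hsub
      have e1 : p.1 = q.1 := Subtype.ext (sub_eq_zero.mp hsub)
      have e2 : p.2 = q.2 := (Subtype.ext (sub_eq_zero.mp h2)).symm
      exact Prod.ext e1 e2
    · intro x
      obtain ⟨y, hy, z, hz, hyz⟩ := Submodule.mem_sup.mp (hVle x.2)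
      exact ⟨(⟨y, hy⟩, ⟨z, hz⟩), Subtype.ext (by rw [hψval]; exact hyz)⟩
  set e : (F × D) ≃ₗ[ℝ] V := LinearEquiv.ofBijective ψ hψbij with he
  set T := (conjMap B).restrict hW with hT
  have hTe : T = (e : F × D →ₗ[ℝ] V) ∘ₗ
      (LinearMap.prodMap (LinearMap.id : F →ₗ[ℝ] F) (-LinearMap.id : D →ₗ[ℝ] D)) ∘ₗ
      (e.symm : V →ₗ[ℝ] F × D) := by
    apply LinearMap.ext
    intro x
    obtain ⟨p, rfl⟩ : ∃ p, e p = x := ⟨e.symm x, e.apply_symm_apply x⟩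
    obtain ⟨y, z⟩ := p
    rw [LinearMap.comp_apply, LinearMap.comp_apply, LinearEquiv.coe_coe, LinearEquiv.coe_coe,
      e.symm_apply_apply]
    obtain ⟨t, ht⟩ := Submodule.mem_span_singleton.mp z.2
    apply Subtype.ext
    rw [LinearMap.restrict_coe_apply]
    have hey : ∀ p : F × D, ((e p : V) : Matrix (Fin g) (Fin g) ℝ) = (p.1 : _) + (p.2 : _) := by
      intro p
      show (ψ p : Matrix (Fin g) (Fin g) ℝ) = _
      exact hψval p
    rw [hey, hey]
    show conjMap B ((y : Matrix (Fin g) (Fin g) ℝ) + (z : Matrix (Fin g) (Fin g) ℝ)) = _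
    rw [map_add, hKF _ y.2]
    have hKz : conjMap B ((z : Matrix (Fin g) (Fin g) ℝ))
        = -(z : Matrix (Fin g) (Fin g) ℝ) := by
      rw [← ht, _root_.map_smul, hKd, smul_neg]
    rw [hKz]
    simp only [LinearMap.prodMap_apply, LinearMap.id_apply, LinearMap.neg_apply]
    show _ = (y : Matrix (Fin g) (Fin g) ℝ) + ((-z : D) : Matrix (Fin g) (Fin g) ℝ)
    rfl
  refine ⟨A, hdetA, himg, hW, ?_⟩
  show LinearMap.det T = -1
  rw [hTe, LinearMap.det_conj, det_prodMap', LinearMap.det_id, one_mul]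
  have hneg : (-LinearMap.id : D →ₗ[ℝ] D) = (-1 : ℝ) • LinearMap.id :=
    LinearMap.ext fun x => (neg_one_smul ℝ x).symm
  rw [hneg, LinearMap.det_smul, LinearMap.det_id, mul_one]
  have hrank : Module.finrank ℝ D = 1 := finrank_span_singleton hd0
  rw [hrank]
  norm_num
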